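/- Let X be a compact Hausdorff space, E a Banach space over 𝕂 ∈ {ℝ, ℂ}, and A a 𝕂-linear subspace of C(X,E). Then for every nonempty convex subset C of S(A) there exist a point x ∈ X and a maximal convex subset K of S(E) such that C ⊆ V^A_{x,K}. -/

import Mathlib

open Set Metric

variable {𝕂 : Type*} [RCLike 𝕂]
variable {X : Type*} [TopologicalSpace X] [CompactSpace X] [T2Space X]
variable {E : Type*} [NormedAddCommGroup E] [NormedSpace ℝ E] [NormedSpace 𝕂 E]
  [IsScalarTower ℝ 𝕂 E] [CompleteSpace E]

/-- `C` is a maximal convex subset of `S` (convexity over `ℝ`). -/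
def MaxConvexIn {M : Type*} [AddCommGroup M] [Module ℝ M] (S C : Set M) : Prop :=
  C ⊆ S ∧ Convex ℝ C ∧ ∀ C' : Set M, C' ⊆ S → Convex ℝ C' → C ⊆ C' → C' = C

/-- The unit sphere `S(A)` of the subspace `A` of `C(X,E)`. -/
def unitSphereOf (A : Subspace 𝕂 C(X, E)) : Set C(X, E) :=
  {f | f ∈ A ∧ ‖f‖ = 1}

/-- The set `V^A_{x,K} = {f ∈ S(A) : f(x) ∈ K}`. -/
def Vset (A : Subspace 𝕂 C(X, E)) (x : X) (K : Set E) : Set C(X, E) :=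
  {f | f ∈ A ∧ ‖f‖ = 1 ∧ f x ∈ K}

/-- Every nonempty convex subset `C` of `S(A)` is contained in some `V^A_{x,K}`
with `K` a maximal convex subset of `S(E)`. -/
theorem stmt0 (A : Subspace 𝕂 C(X, E)) (C : Set C(X, E))
    (hne : C.Nonempty) (hconv : Convex ℝ C) (hsub : C ⊆ unitSphereOf A) :
    ∃ (x : X) (K : Set E),
      MaxConvexIn (sphere (0 : E) 1) K ∧ C ⊆ Vset A x K := by
  classical
  obtain ⟨f0, hf0⟩ := hne
  have hf0n : ‖f0‖ = 1 := (hsub hf0).2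
  have hX : Nonempty X := by
    by_contra h
    rw [not_nonempty_iff] at h
    have hz : f0 = 0 := by ext x; exact (h.false x).elim
    rw [hz, norm_zero] at hf0n
    norm_num at hf0n
  -- common point where all functions of C have norm 1
  have key : (⋂ f : C, {x : X | ‖(f : C(X,E)) x‖ = 1}).Nonempty := by
    by_contra hemp
    rw [Set.not_nonempty_iff_eq_empty] at hemp
    obtain ⟨t, ht⟩ := IsCompact.elim_finite_subfamily_closed isCompact_univ
      (fun f : C => {x : X | ‖(f : C(X,E)) x‖ = 1})
      (fun f => isClosed_eq ((f : C(X,E)).continuous.norm) continuous_const)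
      (by rw [univ_inter]; exact hemp)
    rcases t.eq_empty_or_nonempty with rfl | htne
    · simp only [Finset.notMem_empty, iInter_of_empty, iInter_univ, inter_univ] at ht
      exact (univ_nonempty (α := X)).ne_empty ht
    · set n := t.card with hn
      have hnpos : 0 < n := Finset.card_pos.mpr htne
      have hnne : ((n : ℝ)) ≠ 0 := by positivity
      set g : C(X, E) := (n : ℝ)⁻¹ • ∑ i ∈ t, (i : C(X,E)) with hg
      have hgC : g ∈ C := by
        have := hconv.sum_mem (t := t) (w := fun _ => (n : ℝ)⁻¹)
          (z := fun i => (i : C(X,E))) (fun i _ => by positivity)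
          (by rw [Finset.sum_const, nsmul_eq_mul]; field_simp; exact_mod_cast hn.symm) (fun i _ => i.2)
        rwa [← Finset.smul_sum] at this
      have hgn : ‖g‖ = 1 := (hsub hgC).2
      obtain ⟨x, -, hx⟩ := isCompact_univ.exists_isMaxOn univ_nonempty
        (g.continuous.norm.continuousOn)
      have hgx : ‖g x‖ = 1 := by
        refine le_antisymm (hgn ▸ g.norm_coe_le_norm x) ?_
        rw [← hgn]
        exact (g.norm_le (norm_nonneg _)).mpr (fun y => hx (mem_univ y))
      have hall : ∀ i ∈ t, ‖(i : C(X,E)) x‖ = 1 := by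
        by_contra hcon
        push_neg at hcon
        obtain ⟨j, hjt, hj⟩ := hcon
        have hle : ∀ i ∈ t, ‖(i : C(X,E)) x‖ ≤ 1 := fun i _ => by
          calc ‖(i : C(X,E)) x‖ ≤ ‖(i : C(X,E))‖ := ContinuousMap.norm_coe_le_norm _ x
          _ = 1 := (hsub i.2).2
        have hjlt : ‖(j : C(X,E)) x‖ < 1 := lt_of_le_of_ne (hle j hjt) hj
        have hsum : ∑ i ∈ t, ‖(i : C(X,E)) x‖ < n := by
          calc ∑ i ∈ t, ‖(i : C(X,E)) x‖ < ∑ _i ∈ t, (1 : ℝ) :=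
            Finset.sum_lt_sum hle ⟨j, hjt, hjlt⟩
          _ = n := by simp [hn]
        have hlt : ‖g x‖ < 1 := by
          have h1 : g x = (n : ℝ)⁻¹ • ∑ i ∈ t, (i : C(X,E)) x := by
            simp [hg]
          rw [h1, norm_smul, Real.norm_eq_abs, abs_of_nonneg (by positivity : (0:ℝ) ≤ (n:ℝ)⁻¹)]
          have h2 : ‖∑ i ∈ t, (i : C(X,E)) x‖ ≤ ∑ i ∈ t, ‖(i : C(X,E)) x‖ :=
            norm_sum_le _ _
          calc (n : ℝ)⁻¹ * ‖∑ i ∈ t, (i : C(X,E)) x‖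
              ≤ (n : ℝ)⁻¹ * ∑ i ∈ t, ‖(i : C(X,E)) x‖ := by
                apply mul_le_mul_of_nonneg_left h2 (by positivity)
            _ < (n : ℝ)⁻¹ * n := by
                apply mul_lt_mul_of_pos_left hsum (by positivity)
            _ = 1 := by field_simp
        rw [hgx] at hlt
        exact lt_irrefl _ hlt
      have hxmem : x ∈ (univ : Set X) ∩ ⋂ i ∈ t, {x : X | ‖(i : C(X,E)) x‖ = 1} :=
        ⟨mem_univ x, mem_iInter₂.mpr (fun i hi => hall i hi)⟩
      rw [ht] at hxmem
      exact hxmem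
  obtain ⟨x, hx⟩ := key
  simp only [mem_iInter, mem_setOf_eq] at hx
  set D : Set E := (fun f : C(X,E) => f x) '' C with hD
  have hDsub : D ⊆ sphere (0:E) 1 := by
    rintro - ⟨f, hf, rfl⟩
    rw [mem_sphere_zero_iff_norm]
    exact hx ⟨f, hf⟩
  have hDconv : Convex ℝ D := by
    rintro - ⟨f, hf, rfl⟩ - ⟨g', hg', rfl⟩ a b ha hb hab
    exact ⟨a • f + b • g', hconv hf hg' ha hb hab, by simp⟩
  -- Zorn's lemma to get a maximal convex subset of the sphere containing D
  obtain ⟨K, hDK, hKmax⟩ := zorn_subset_nonempty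
    {K : Set E | K ⊆ sphere (0:E) 1 ∧ Convex ℝ K ∧ D ⊆ K}
    (fun c hc hchain hcne => by
      obtain ⟨s, hs⟩ := hcne
      refine ⟨⋃₀ c, ⟨?_, ?_, (hc hs).2.2.trans (subset_sUnion_of_mem hs)⟩,
        fun u hu => subset_sUnion_of_mem hu⟩
      · exact sUnion_subset fun u hu => (hc hu).1
      · intro p hp q hq a b ha hb hab
        obtain ⟨u, hu, hpu⟩ := hp
        obtain ⟨v, hv, hqv⟩ := hq
        rcases hchain.total hu hv with huv | hvu
        · exact ⟨v, hv, (hc hv).2.1 (huv hpu) hqv ha hb hab⟩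
        · exact ⟨u, hu, (hc hu).2.1 hpu (hvu hqv) ha hb hab⟩)
    D ⟨hDsub, hDconv, subset_rfl⟩
  refine ⟨x, K, ⟨hKmax.prop.1, hKmax.prop.2.1, fun C' hC'sub hC'conv hKC' => ?_⟩, ?_⟩
  · exact hKmax.eq_of_superset ⟨hC'sub, hC'conv, hDK.trans hKC'⟩ hKC'
  · intro f hf
    exact ⟨(hsub hf).1, (hsub hf).2, hDK ⟨f, hf, rfl⟩⟩
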